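/- Let F_1, …, F_{mn} ∈ M_{m,n}(ℂ). Then {F_1,…,F_{mn}} is orthonormal with respect to the inner product (X,Y) = tr(XY†) if and only if for every orthonormal basis {x_1,…,x_n} of ℂ^n, the matrices P_r = ∑_{i,j=1}^n |x_i⟩⟨x_j| ⊗ F_r |x_i⟩⟨x_j| F_r† (1 ≤ r ≤ mn) form a family of mutually orthogonal rank-one orthogonal projections in M_{mn}(ℂ). -/

import Mathlib

open Matrix Kronecker

namespace Stmt6Aux

variable {m n : ℕ}

/-- The combined vector `∑ p, x_p ⊗ F x_p`. -/
noncomputable def vv (x : Fin n → Fin n → ℂ) (F : Matrix (Fin m) (Fin n) ℂ) : Fin n × Fin m → ℂ :=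
  fun ik => ∑ p, x p ik.1 * (F *ᵥ x p) ik.2

lemma sum_kron (x : Fin n → Fin n → ℂ) (F : Matrix (Fin m) (Fin n) ℂ) :
    ((∑ i, ∑ j, Matrix.vecMulVec (x i) (star (x j)) ⊗ₖ
        Matrix.vecMulVec (F *ᵥ x i) (star (F *ᵥ x j))) :
      Matrix (Fin n × Fin m) (Fin n × Fin m) ℂ)
    = vecMulVec (vv x F) (star (vv x F)) := by
  ext ⟨i, k⟩ ⟨j, l⟩
  simp only [Matrix.sum_apply, kroneckerMap_apply, vecMulVec_apply, Pi.star_apply, vv,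
    star_sum, star_mul']
  rw [Finset.sum_mul_sum]
  refine Finset.sum_congr rfl fun p _ => Finset.sum_congr rfl fun q _ => by ring

lemma vmv_mul {α : Type*} [Fintype α] (u v w z : α → ℂ) :
    vecMulVec u v * vecMulVec w z = (v ⬝ᵥ w) • vecMulVec u z := by
  ext i j
  simp only [mul_apply, vecMulVec_apply, Matrix.smul_apply, dotProduct, smul_eq_mul, Finset.sum_mul]
  exact Finset.sum_congr rfl fun k _ => by ring

lemma vmv_herm {α : Type*} (v : α → ℂ) : (vecMulVec v (star v)).IsHermitian := by
  ext i j
  simp only [conjTranspose_apply, vecMulVec_apply, Pi.star_apply, star_mul', star_star]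
  exact mul_comm _ _

lemma col_orth (x : Fin n → Fin n → ℂ)
    (hx : ∀ i j, star (x i) ⬝ᵥ x j = if i = j then 1 else 0) (a b : Fin n) :
    ∑ p, star (x p a) * x p b = if a = b then 1 else 0 := by
  have h1 : (Matrix.of x) * (Matrix.of x)ᴴ = 1 := by
    ext i j
    have h := hx j i
    simp only [dotProduct, Pi.star_apply] at h
    simp only [mul_apply, conjTranspose_apply, of_apply, one_apply]
    rw [show (if i = j then (1:ℂ) else 0) = if j = i then 1 else 0 by simp [eq_comm], ← h]
    exact Finset.sum_congr rfl fun k _ => mul_comm _ _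
  have h2 := mul_eq_one_comm.mp h1
  have h3 := congrFun (congrFun h2 a) b
  simpa [mul_apply, conjTranspose_apply, one_apply] using h3

lemma vv_eq (x : Fin n → Fin n → ℂ) (F : Matrix (Fin m) (Fin n) ℂ) :
    vv x F = fun ik => ((Matrix.of x)ᵀ * (Matrix.of x) * Fᵀ) ik.1 ik.2 := by
  funext ik
  obtain ⟨i, k⟩ := ik
  simp only [vv, mulVec, dotProduct, Matrix.mul_apply, transpose_apply, of_apply,
    Finset.mul_sum, Finset.sum_mul]
  rw [Finset.sum_comm]
  refine Finset.sum_congr rfl fun p _ => Finset.sum_congr rfl fun a _ => by ring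

lemma dot_trace (M N : Matrix (Fin n) (Fin m) ℂ) :
    star (fun ik : Fin n × Fin m => M ik.1 ik.2) ⬝ᵥ (fun ik : Fin n × Fin m => N ik.1 ik.2)
      = (Mᴴ * N).trace := by
  simp only [dotProduct, Pi.star_apply, trace, diag, Matrix.mul_apply, conjTranspose_apply,
    Fintype.sum_prod_type]
  rw [Finset.sum_comm]

lemma dot_v (x : Fin n → Fin n → ℂ)
    (hx : ∀ i j, star (x i) ⬝ᵥ x j = if i = j then 1 else 0)
    (F G : Matrix (Fin m) (Fin n) ℂ) :
    star (vv x F) ⬝ᵥ vv x G = (G * Fᴴ).trace := by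
  set X : Matrix (Fin n) (Fin n) ℂ := Matrix.of x with hXdef
  have hX : X * Xᴴ = 1 := by
    ext i j
    have h := hx j i
    simp only [dotProduct, Pi.star_apply] at h
    simp only [mul_apply, conjTranspose_apply, of_apply, one_apply, hXdef]
    rw [show (if i = j then (1:ℂ) else 0) = if j = i then 1 else 0 by simp [eq_comm], ← h]
    exact Finset.sum_congr rfl fun k _ => mul_comm _ _
  have hX' : Xᴴ * X = 1 := mul_eq_one_comm.mp hX
  rw [vv_eq, vv_eq, dot_trace]
  have e1 : ∀ (A : Matrix (Fin n) (Fin n) ℂ) (B : Matrix (Fin m) (Fin n) ℂ), (A * Bᵀ)ᴴ = Bᵀᴴ * Aᴴ := by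
    intro A B; rw [conjTranspose_mul]
  have e2 : (Xᵀ)ᴴ * Xᵀ = 1 := by
    have : (Xᵀ)ᴴ = (Xᴴ)ᵀ := by ext i j; simp [conjTranspose_apply, transpose_apply]
    rw [this, ← transpose_mul, hX, transpose_one]
  have key : (Xᵀ * X * Fᵀ)ᴴ * (Xᵀ * X * Gᵀ) = (G * Fᴴ)ᵀ := by
    have e3 : (Fᵀ)ᴴ = (Fᴴ)ᵀ := by ext i j; simp [conjTranspose_apply, transpose_apply]
    calc (Xᵀ * X * Fᵀ)ᴴ * (Xᵀ * X * Gᵀ)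
        = (Fᵀ)ᴴ * (Xᴴ * ((Xᵀ)ᴴ * Xᵀ) * (X * Gᵀ)) := by
          simp only [conjTranspose_mul, Matrix.mul_assoc]
      _ = (Fᵀ)ᴴ * (Xᴴ * (X * Gᵀ)) := by rw [e2, Matrix.mul_one]
      _ = (Fᵀ)ᴴ * ((Xᴴ * X) * Gᵀ) := by rw [Matrix.mul_assoc]
      _ = (Fᵀ)ᴴ * Gᵀ := by rw [hX', Matrix.one_mul]
      _ = (Fᴴ)ᵀ * Gᵀ := by rw [e3]
      _ = (G * Fᴴ)ᵀ := by rw [← transpose_mul]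
  rw [key, trace_transpose]

lemma rank_pos_of_ne_zero {ι κ : Type*} [Fintype ι] [Fintype κ] [DecidableEq κ]
    {A : Matrix ι κ ℂ} (hA : A ≠ 0) : 0 < A.rank := by
  obtain ⟨a, b, hab⟩ : ∃ a b, A a b ≠ 0 := by
    by_contra hc
    push_neg at hc
    exact hA (by ext a b; simpa using hc a b)
  rw [Matrix.rank]
  refine Module.finrank_pos_iff_exists_ne_zero.mpr ⟨⟨A *ᵥ Pi.single b 1, ⟨Pi.single b 1, rfl⟩⟩, ?_⟩
  intro h0
  have h1 : A *ᵥ Pi.single b 1 = 0 := congrArg Subtype.val h0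
  have h2 := congrFun h1 a
  simp [Matrix.mulVec_single] at h2
  exact hab h2

lemma rank_vmv {ι : Type*} [Fintype ι] [DecidableEq ι] {v : ι → ℂ} (hv : v ≠ 0) :
    (vecMulVec v (star v)).rank = 1 := by
  refine le_antisymm ?_ ?_
  · rw [vecMulVec_eq (Fin 1)]
    exact (Matrix.rank_mul_le_left _ _).trans ((Matrix.rank_le_card_width _).trans (by simp))
  · obtain ⟨a, ha⟩ : ∃ a, v a ≠ 0 := by
      by_contra hc; push_neg at hc; exact hv (funext fun a => hc a)
    refine rank_pos_of_ne_zero ?_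
    intro h0
    have := congrFun (congrFun h0 a) a
    simp only [vecMulVec_apply, Pi.star_apply, Matrix.zero_apply] at this
    exact ha (by simpa [mul_comm] using (mul_eq_zero.mp this).resolve_right (by simpa using ha ∘ star_eq_zero.mp))

lemma vmv_self_eq_zero {ι : Type*} {v : ι → ℂ} (h : vecMulVec v (star v) = 0) : v = 0 := by
  funext a
  have := congrFun (congrFun h a) a
  simp only [vecMulVec_apply, Pi.star_apply, Matrix.zero_apply] at this
  rcases mul_eq_zero.mp this with h1 | h1
  · exact h1
  · exact star_eq_zero.mp h1

end Stmt6Aux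

open Stmt6Aux

open Matrix Kronecker in
/-- `{F_1,…,F_{mn}}` is orthonormal for the trace inner product iff
for every orthonormal basis `{x_1,…,x_n}` of `ℂ^n` the matrices
`P_r = ∑_{i,j} |x_i⟩⟨x_j| ⊗ F_r|x_i⟩⟨x_j|F_r†` are mutually orthogonal rank-one
orthogonal projections. -/
theorem stmt_6 {m n : ℕ} (F : Fin (m * n) → Matrix (Fin m) (Fin n) ℂ) :
    (∀ r s, (F r * (F s)ᴴ).trace = if r = s then 1 else 0)
    ↔ (∀ x : Fin n → Fin n → ℂ,
        (∀ i j, star (x i) ⬝ᵥ x j = if i = j then 1 else 0) →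
        (∀ r, ((∑ i, ∑ j, Matrix.vecMulVec (x i) (star (x j)) ⊗ₖ
              Matrix.vecMulVec (F r *ᵥ x i) (star (F r *ᵥ x j))) :
            Matrix (Fin n × Fin m) (Fin n × Fin m) ℂ).IsHermitian) ∧
        (∀ r, (∑ i, ∑ j, Matrix.vecMulVec (x i) (star (x j)) ⊗ₖ
              Matrix.vecMulVec (F r *ᵥ x i) (star (F r *ᵥ x j))) *
            (∑ i, ∑ j, Matrix.vecMulVec (x i) (star (x j)) ⊗ₖ
              Matrix.vecMulVec (F r *ᵥ x i) (star (F r *ᵥ x j))) =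
            ∑ i, ∑ j, Matrix.vecMulVec (x i) (star (x j)) ⊗ₖ
              Matrix.vecMulVec (F r *ᵥ x i) (star (F r *ᵥ x j))) ∧
        (∀ r, ((∑ i, ∑ j, Matrix.vecMulVec (x i) (star (x j)) ⊗ₖ
              Matrix.vecMulVec (F r *ᵥ x i) (star (F r *ᵥ x j))) :
            Matrix (Fin n × Fin m) (Fin n × Fin m) ℂ).rank = 1) ∧
        (∀ r s, r ≠ s →
          (∑ i, ∑ j, Matrix.vecMulVec (x i) (star (x j)) ⊗ₖ
              Matrix.vecMulVec (F r *ᵥ x i) (star (F r *ᵥ x j))) *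
            (∑ i, ∑ j, Matrix.vecMulVec (x i) (star (x j)) ⊗ₖ
              Matrix.vecMulVec (F s *ᵥ x i) (star (F s *ᵥ x j))) = 0)) := by
  constructor
  · intro h x hx
    refine ⟨?_, ?_, ?_, ?_⟩
    · intro r
      rw [sum_kron]
      exact vmv_herm _
    · intro r
      rw [sum_kron, vmv_mul, dot_v x hx, h r r, if_pos rfl, one_smul]
    · intro r
      rw [sum_kron]
      refine rank_vmv ?_
      intro h0
      have h1 := dot_v x hx (F r) (F r)
      rw [h0, h r r, if_pos rfl] at h1
      simp at h1
    · intro r s hrs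
      rw [sum_kron, sum_kron, vmv_mul, dot_v x hx, h s r, if_neg (Ne.symm hrs), zero_smul]
  · intro h r s
    have hstd : ∀ i j : Fin n,
        star ((fun i => (Pi.single i 1 : Fin n → ℂ)) i) ⬝ᵥ
          (fun i => (Pi.single i 1 : Fin n → ℂ)) j = if i = j then 1 else 0 := by
      intro i j
      simp [dotProduct, Pi.single_apply, apply_ite, Finset.sum_ite_eq, eq_comm]
    obtain ⟨hH, hId, hRank, hOrth⟩ := h _ hstd
    set e : Fin n → Fin n → ℂ := fun i => Pi.single i 1 with he
    have hvne : ∀ t, vv e (F t) ≠ 0 := by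
      intro t h0
      have h1 := hRank t
      rw [sum_kron, h0] at h1
      have hz : (vecMulVec (0 : Fin n × Fin m → ℂ) (star (0 : Fin n × Fin m → ℂ))) = 0 := by
        ext i j; simp [Matrix.vecMulVec_apply]
      rw [hz, Matrix.rank_zero] at h1
      exact absurd h1 (by norm_num)
    by_cases hrs : r = s
    · subst hrs
      rw [if_pos rfl]
      have h1 := hId r
      rw [sum_kron, vmv_mul, dot_v e hstd] at h1
      obtain ⟨a, ha⟩ : ∃ a, vv e (F r) a ≠ 0 := by
        by_contra hc; push_neg at hc; exact hvne r (funext fun a => hc a)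
      have h2 := congrFun (congrFun h1 a) a
      simp only [Matrix.smul_apply, vecMulVec_apply, Pi.star_apply, smul_eq_mul] at h2
      have hc : vv e (F r) a * star (vv e (F r) a) ≠ 0 :=
        mul_ne_zero ha (star_ne_zero.mpr ha)
      have := mul_right_cancel₀ hc (h2.trans (one_mul _).symm)
      exact this
    · rw [if_neg hrs]
      have h1 := hOrth s r (Ne.symm hrs)
      rw [sum_kron, sum_kron, vmv_mul, dot_v e hstd] at h1
      obtain ⟨a, ha⟩ : ∃ a, vv e (F s) a ≠ 0 := by
        by_contra hc; push_neg at hc; exact hvne s (funext fun a => hc a)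
      obtain ⟨b, hb⟩ : ∃ b, vv e (F r) b ≠ 0 := by
        by_contra hc; push_neg at hc; exact hvne r (funext fun b => hc b)
      have h2 := congrFun (congrFun h1 a) b
      simp only [Matrix.smul_apply, vecMulVec_apply, Pi.star_apply, smul_eq_mul,
        Matrix.zero_apply] at h2
      rcases mul_eq_zero.mp h2 with h3 | h3
      · exact h3
      · rcases mul_eq_zero.mp h3 with h4 | h4
        · exact absurd h4 ha
        · exact absurd (star_eq_zero.mp h4) hb
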